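/- Let G be an undirected graph (a finite connected loopless multigraph). A chip-distribution x on G is non-terminating if and only if there exists an acyclic orientation of G with indegree vector ρ and a chip-distribution a ≥ 0 such that x ∼ ρ + a. -/

import Mathlib

set_option linter.unusedSectionVars false
set_option linter.unusedVariables false
set_option maxHeartbeats 1000000

open Finset

variable {V : Type} [Fintype V] [DecidableEq V]

/-- The outdegree of a vertex `v` in the multidigraph with multiplicity function `m`
(`m u v` is the number of directed edges from `u` to `v`). -/
def outdeg (m : V → V → ℕ) (v : V) : ℤ := ∑ u, (m v u : ℤ)

/-- The indegree of a vertex. -/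
def indeg (m : V → V → ℕ) (v : V) : ℤ := ∑ u, (m u v : ℤ)

/-- The digraph is loopless. -/
def Loopless (m : V → V → ℕ) : Prop := ∀ v, m v v = 0

/-- The digraph is strongly connected: every vertex reaches every vertex on a directed path. -/
def StronglyConnected (m : V → V → ℕ) : Prop :=
  ∀ u v : V, Relation.ReflTransGen (fun a b => 0 < m a b) u v

/-- Firing vertex `v` in chip-distribution `x`: `v` sends a chip along each outgoing edge. -/
def fire (m : V → V → ℕ) (x : V → ℤ) (v : V) : V → ℤ :=
  fun u => x u + (m v u : ℤ) - (if u = v then outdeg m v else 0)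

/-- The degree (total number of chips) of a chip-distribution / divisor. -/
def degSum (x : V → ℤ) : ℤ := ∑ v, x v

/-- The state of the chip-firing game after `n` steps, starting from `x` and
firing the vertices `s 0, s 1, …` in this order. -/
def gameState (m : V → V → ℕ) (x : V → ℤ) (s : ℕ → V) : ℕ → (V → ℤ)
  | 0 => x
  | n + 1 => fire m (gameState m x s n) (s n)

/-- `s` encodes an infinite legal chip-firing game starting from `x`:
at each step the fired vertex is active. -/
def InfGame (m : V → V → ℕ) (x : V → ℤ) (s : ℕ → V) : Prop :=
  ∀ n, outdeg m (s n) ≤ gameState m x s n (s n)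

/-- A chip-distribution is terminating if no infinite legal game starts from it. -/
def Terminating (m : V → V → ℕ) (x : V → ℤ) : Prop :=
  ¬ ∃ s : ℕ → V, InfGame m x s

/-- The Laplacian of the digraph applied to `z`. -/
def lap (m : V → V → ℕ) (z : V → ℤ) : V → ℤ :=
  fun u => (∑ v, (m v u : ℤ) * z v) - outdeg m u * z u

/-- Linear equivalence: `x ∼ y` iff `x = y + L z` for some integer vector `z`. -/
def LinEquiv (m : V → V → ℕ) (x y : V → ℤ) : Prop :=
  ∃ z : V → ℤ, x = y + lap m z

/-- A multidigraph (given by its multiplicity function) is acyclic if it has no directed cycle,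
i.e. no vertex can reach itself by a directed walk of positive length. -/
def AcyclicMul (k : V → V → ℕ) : Prop :=
  ∀ v : V, ¬ Relation.TransGen (fun a b => 0 < k a b) v v

/-! ### Auxiliary lemmas -/

/-- indicator vector -/
def ind (v : V) : V → ℤ := fun u => if u = v then 1 else 0

lemma lap_ind (m : V → V → ℕ) (v u : V) :
    lap m (ind v) u = (m v u : ℤ) - (if u = v then outdeg m v else 0) := by
  unfold lap ind
  rw [Finset.sum_congr rfl (fun w _ => by rw [mul_ite, mul_one, mul_zero])]
  rw [Finset.sum_ite_eq' Finset.univ v (fun w => (m w u : ℤ)), if_pos (Finset.mem_univ v)]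
  by_cases h : u = v <;> simp [h]

lemma fire_eq (m : V → V → ℕ) (x : V → ℤ) (v u : V) :
    fire m x v u = x u + lap m (ind v) u := by
  rw [lap_ind]; unfold fire; ring

lemma lap_add (m : V → V → ℕ) (y z : V → ℤ) (u : V) :
    lap m (y + z) u = lap m y u + lap m z u := by
  unfold lap
  simp only [Pi.add_apply, mul_add, Finset.sum_add_distrib]
  ring

lemma lap_add' (m : V → V → ℕ) (y z : V → ℤ) (u : V) :
    lap m (fun w => y w + z w) u = lap m y u + lap m z u := lap_add m y z u

lemma lap_neg (m : V → V → ℕ) (z : V → ℤ) (u : V) :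
    lap m (-z) u = - lap m z u := by
  unfold lap
  simp
  ring

lemma lap_zero (m : V → V → ℕ) (u : V) : lap m 0 u = 0 := by
  unfold lap; simp

lemma lap_const (m : V → V → ℕ) (hsym : ∀ u v, m u v = m v u) (b : ℤ) (u : V) :
    lap m (fun _ => b) u = 0 := by
  unfold lap outdeg
  have h : (∑ v, (m v u : ℤ) * b) = (∑ v, (m u v : ℤ)) * b := by
    rw [Finset.sum_mul]
    exact Finset.sum_congr rfl (fun w _ => by rw [hsym w u])
  rw [h]; ring

lemma degSum_fire (m : V → V → ℕ) (x : V → ℤ) (v : V) :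
    degSum (fire m x v) = degSum x := by
  unfold degSum fire
  rw [Finset.sum_sub_distrib, Finset.sum_add_distrib]
  rw [Finset.sum_ite_eq' Finset.univ v (fun _ => outdeg m v), if_pos (Finset.mem_univ v)]
  unfold outdeg; ring

lemma degSum_gameState (m : V → V → ℕ) (x : V → ℤ) (s : ℕ → V) (n : ℕ) :
    degSum (gameState m x s n) = degSum x := by
  induction n with
  | zero => rfl
  | succ n ih => rw [gameState, degSum_fire, ih]

section Game
variable {m : V → V → ℕ} {x : V → ℤ} {s : ℕ → V}

lemma state_step (n : ℕ) (u : V) :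
    gameState m x s (n+1) u
      = gameState m x s n u + (m (s n) u : ℤ) - (if u = s n then outdeg m (s n) else 0) := rfl

lemma state_lower (hs : InfGame m x s) (n : ℕ) (u : V) :
    min (x u) 0 ≤ gameState m x s n u := by
  induction n with
  | zero => exact min_le_left _ _
  | succ n ih =>
    rw [state_step]
    by_cases h : u = s n
    · rw [if_pos h, ← h]
      have h2 := hs n
      rw [← h] at h2
      have hm : (0:ℤ) ≤ (m u u : ℤ) := Int.natCast_nonneg _
      have hm2 : (0:ℤ) ≤ (m (s n) u : ℤ) := Int.natCast_nonneg _
      omega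
    · simp only [if_neg h]
      have hm : (0:ℤ) ≤ (m (s n) u : ℤ) := Int.natCast_nonneg _
      omega

lemma state_upper (hs : InfGame m x s) (n : ℕ) (u : V) :
    gameState m x s n u ≤ degSum x - ∑ w ∈ Finset.univ.erase u, min (x w) 0 := by
  have h1 : degSum (gameState m x s n)
      = gameState m x s n u + ∑ w ∈ Finset.univ.erase u, gameState m x s n w := by
    unfold degSum
    rw [← Finset.add_sum_erase _ _ (Finset.mem_univ u)]
  have h2 : ∑ w ∈ Finset.univ.erase u, min (x w) 0
      ≤ ∑ w ∈ Finset.univ.erase u, gameState m x s n w :=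
    Finset.sum_le_sum (fun w _ => state_lower hs n w)
  rw [degSum_gameState m x s n] at h1
  omega

/-- monotonicity at a vertex that is not fired in an interval -/
lemma state_mono {u : V} {i j : ℕ} (hnotfired : ∀ k, i ≤ k → k < j → s k ≠ u) (hij : i ≤ j) :
    gameState m x s i u ≤ gameState m x s j u := by
  induction j with
  | zero =>
    have : i = 0 := Nat.le_zero.mp hij
    subst this; exact le_refl _
  | succ j ih =>
    rcases Nat.lt_or_ge i (j+1) with h | h
    · have hij' : i ≤ j := by omega
      have step : gameState m x s j u ≤ gameState m x s (j+1) u := by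
        rw [state_step, if_neg (Ne.symm (hnotfired j hij' (by omega)))]
        have : (0:ℤ) ≤ (m (s j) u : ℤ) := Int.natCast_nonneg _
        omega
      exact le_trans (ih (fun k hk1 hk2 => hnotfired k hk1 (by omega)) hij') step
    · have : i = j + 1 := by omega
      subst this; rfl

/-- accumulation of chips at a vertex that is not fired in an interval -/
lemma state_accum {u : V} {i j : ℕ} (hnotfired : ∀ k, i ≤ k → k < j → s k ≠ u) (hij : i ≤ j) :
    gameState m x s i u + ∑ k ∈ Finset.Ico i j, (m (s k) u : ℤ) ≤ gameState m x s j u := by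
  induction j with
  | zero =>
    have : i = 0 := Nat.le_zero.mp hij
    subst this; simp
  | succ j ih =>
    rcases Nat.lt_or_ge i (j+1) with h | h
    · have hij' : i ≤ j := by omega
      have ihj := ih (fun k hk1 hk2 => hnotfired k hk1 (by omega)) hij'
      have step : gameState m x s j u + (m (s j) u : ℤ) ≤ gameState m x s (j+1) u := by
        rw [state_step, if_neg (Ne.symm (hnotfired j hij' (by omega)))]
        omega
      rw [Finset.sum_Ico_succ_top hij']
      omega
    · have : i = j + 1 := by omega
      subst this; simp

lemma fires_io (hsym : ∀ u v, m u v = m v u) (hconn : StronglyConnected m)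
    (hs : InfGame m x s) : ∀ v N, ∃ n, N ≤ n ∧ s n = v := by
  set S : Set V := {v | ∀ N, ∃ n, N ≤ n ∧ s n = v} with hS
  obtain ⟨v₀, hv₀⟩ := Finite.exists_infinite_fiber s
  have hv₀S : v₀ ∈ S := by
    intro N
    by_contra hc
    push_neg at hc
    have hsub : (s ⁻¹' {v₀}) ⊆ Set.Iio N := by
      intro n hn
      simp only [Set.mem_preimage, Set.mem_singleton_iff] at hn
      rw [Set.mem_Iio]
      by_contra h
      exact hc n (by omega) hn
    have : (s ⁻¹' {v₀}).Finite := Set.Finite.subset (Set.finite_Iio N) hsub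
    exact (Set.infinite_coe_iff.mp hv₀) this
  have hclosed : ∀ u w, u ∈ S → 0 < m u w → w ∈ S := by
    intro u w huS hm
    by_contra hwS
    simp only [hS, Set.mem_setOf_eq] at hwS
    push_neg at hwS
    obtain ⟨N, hN⟩ := hwS
    have key : ∀ k : ℕ, ∃ n, N ≤ n ∧ gameState m x s N w + k ≤ gameState m x s n w := by
      intro k
      induction k with
      | zero => exact ⟨N, le_refl _, by omega⟩
      | succ k ih =>
        obtain ⟨n, hn, hval⟩ := ih
        obtain ⟨n', hn', hsn'⟩ := huS n
        have hmono : gameState m x s n w ≤ gameState m x s n' w :=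
          state_mono (fun j hj1 hj2 => hN j (by omega)) hn'
        have hstep : gameState m x s n' w + 1 ≤ gameState m x s (n'+1) w := by
          rw [state_step, hsn']
          have hww : w ≠ u := by intro h; subst h; exact hN n' (by omega) hsn'
          rw [if_neg hww]
          have : (1:ℤ) ≤ (m u w : ℤ) := by exact_mod_cast hm
          omega
        exact ⟨n'+1, by omega, by push_cast; push_cast at hval; omega⟩
    obtain ⟨n, _, hval⟩ := key
      (degSum x - ∑ w' ∈ Finset.univ.erase w, min (x w') 0 - gameState m x s N w + 1).toNat
    have hub := state_upper hs n w
    have := Int.self_le_toNat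
      (degSum x - ∑ w' ∈ Finset.univ.erase w, min (x w') 0 - gameState m x s N w + 1)
    omega
  intro v
  have hreach := hconn v₀ v
  induction hreach with
  | refl => exact hv₀S
  | tail _ hbc ih => exact hclosed _ _ ih hbc

lemma gameState_lap (n : ℕ) :
    ∃ c : V → ℤ, ∀ u, gameState m x s n u = x u + lap m c u := by
  induction n with
  | zero => exact ⟨0, fun u => by rw [lap_zero]; show x u = x u + 0; ring⟩
  | succ n ih =>
    obtain ⟨c, hc⟩ := ih
    refine ⟨c + ind (s n), fun u => ?_⟩
    rw [state_step]
    have := lap_add m c (ind (s n)) u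
    rw [this, hc u, lap_ind]
    ring

end Game

lemma forward_dir {m : V → V → ℕ} {x : V → ℤ}
    (hsym : ∀ u v, m u v = m v u) (hloop : Loopless m) (hconn : StronglyConnected m)
    (hx : ¬ Terminating m x) :
    ∃ o : V → V → ℕ, (∀ u v, o u v + o v u = m u v) ∧ AcyclicMul o ∧
      ∃ a : V → ℤ, 0 ≤ a ∧ LinEquiv m x (fun v => (∑ u, (o u v : ℤ)) + a v) := by
  rw [Terminating, not_not] at hx
  obtain ⟨s, hs⟩ := hx
  have hio := fires_io hsym hconn hs
  -- a time bound by which each vertex has fired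
  have hnf : ∀ v : V, ∃ n, s n = v := fun v => by
    obtain ⟨n, _, hn⟩ := hio v 0; exact ⟨n, hn⟩
  set nf : V → ℕ := fun v => (hnf v).choose with hnf_def
  have hnf_spec : ∀ v, s (nf v) = v := fun v => (hnf v).choose_spec
  set t₁ : ℕ := (Finset.univ.sup nf) + 1 with ht₁
  have hnf_le : ∀ v, nf v ≤ t₁ - 1 := fun v => by
    have := Finset.le_sup (f := nf) (Finset.mem_univ v); omega
  -- last firing time before t₁
  set L : V → ℕ := fun v => Nat.findGreatest (fun i => s i = v) (t₁ - 1) with hL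
  have hLs : ∀ v, s (L v) = v := fun v =>
    Nat.findGreatest_spec (P := fun i => s i = v) (hnf_le v) (hnf_spec v)
  have hLle : ∀ v, L v ≤ t₁ - 1 := fun v => Nat.findGreatest_le (P := fun i => s i = v) _
  have hLlt : ∀ v, L v < t₁ := fun v => by have := hLle v; omega
  have hLgt : ∀ v k, L v < k → k < t₁ → s k ≠ v := fun v k h1 h2 =>
    Nat.findGreatest_is_greatest (P := fun i => s i = v) h1 (by omega)
  have hLinj : ∀ u v, L u = L v → u = v := fun u v h => by
    rw [← hLs u, ← hLs v, h]
  -- the orientation: edges point towards earlier last-firing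
  set o : V → V → ℕ := fun u v => if L v < L u then m u v else 0 with ho
  set ρ : V → ℤ := fun v => ∑ u, (o u v : ℤ) with hρ
  set z : V → ℤ := gameState m x s t₁ with hz
  -- key bound
  have hbound : ∀ v, ρ v ≤ z v := by
    intro v
    have hleg : outdeg m (s (L v)) ≤ gameState m x s (L v) (s (L v)) := hs (L v)
    rw [hLs v] at hleg
    have hstep1 : (m v v : ℤ) ≤ gameState m x s (L v + 1) v := by
      rw [state_step, hLs v, if_pos rfl]
      omega
    have hmvv : (0:ℤ) ≤ gameState m x s (L v + 1) v := by
      have : (0:ℤ) ≤ (m v v : ℤ) := Int.natCast_nonneg _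
      omega
    have haccum := state_accum (m := m) (x := x) (s := s) (u := v)
      (i := L v + 1) (j := t₁) (fun k hk1 hk2 => hLgt v k (by omega) hk2) (hLlt v)
    -- ρ v is at most the sum of received chips
    have hsum : ρ v ≤ ∑ k ∈ Finset.Ico (L v + 1) t₁, (m (s k) v : ℤ) := by
      have h1 : ∑ u, (o u v : ℤ) = ∑ u ∈ Finset.univ.filter (fun u => L v < L u), (m u v : ℤ) := by
        show (∑ u, ((if L v < L u then m u v else 0 : ℕ) : ℤ)) = _
        rw [Finset.sum_filter]
        exact Finset.sum_congr rfl (fun u _ => by by_cases h : L v < L u <;> simp [h])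
      calc ρ v = ∑ u ∈ Finset.univ.filter (fun u => L v < L u), (m u v : ℤ) := h1
        _ ≤ ∑ k ∈ Finset.Ico (L v + 1) t₁, (m (s k) v : ℤ) := ?_
      have h2 : ∑ u ∈ Finset.univ.filter (fun u => L v < L u), (m u v : ℤ)
          = ∑ k ∈ (Finset.univ.filter (fun u => L v < L u)).image L, (m (s k) v : ℤ) := by
        rw [Finset.sum_image (fun u _ w _ h => hLinj u w h)]
        exact Finset.sum_congr rfl (fun u _ => by rw [hLs u])
      rw [h2]
      apply Finset.sum_le_sum_of_subset_of_nonneg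
      · intro k hk
        simp only [Finset.mem_image, Finset.mem_filter, Finset.mem_univ, true_and] at hk
        obtain ⟨u, hu, rfl⟩ := hk
        rw [Finset.mem_Ico]
        exact ⟨by omega, hLlt u⟩
      · intro k _ _; exact Int.natCast_nonneg _
    calc ρ v ≤ ∑ k ∈ Finset.Ico (L v + 1) t₁, (m (s k) v : ℤ) := hsum
      _ ≤ gameState m x s (L v + 1) v + ∑ k ∈ Finset.Ico (L v + 1) t₁, (m (s k) v : ℤ) := by omega
      _ ≤ gameState m x s t₁ v := haccum
  refine ⟨o, ?_, ?_, fun v => z v - ρ v, ?_, ?_⟩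
  · -- orientation property
    intro u v
    show (if L v < L u then m u v else 0) + (if L u < L v then m v u else 0) = m u v
    by_cases huv : u = v
    · subst huv
      simp [hloop u]
    · have hne : L u ≠ L v := fun h => huv (hLinj u v h)
      rcases Nat.lt_or_ge (L v) (L u) with h | h
      · rw [if_pos h, if_neg (by omega)]; ring
      · rw [if_neg (by omega), if_pos (by omega), hsym u v]; ring
  · -- acyclicity
    intro v hcyc
    have hedge : ∀ a b, 0 < o a b → L b < L a := by
      intro a b h
      by_contra hc
      have h0 : o a b = 0 := by
        show (if L b < L a then m a b else 0) = 0
        rw [if_neg hc]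
      omega
    have hlt : ∀ a b, Relation.TransGen (fun a b => 0 < o a b) a b → L b < L a := by
      intro a b h
      induction h with
      | single h => exact hedge _ _ h
      | tail h₂ h₃ ih => exact lt_trans (hedge _ _ h₃) ih
    exact absurd (hlt v v hcyc) (by omega)
  · -- nonnegativity
    intro v
    simp only [Pi.zero_apply]
    have := hbound v
    omega
  · -- linear equivalence
    obtain ⟨c, hc⟩ := gameState_lap (m := m) (x := x) (s := s) t₁
    refine ⟨-c, ?_⟩
    funext u
    simp only [Pi.add_apply]
    rw [lap_neg]
    have := hc u
    rw [hz]
    have hzu : z u = gameState m x s t₁ u := by rw [hz]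
    have hρu : ρ u = ∑ w, (o w u : ℤ) := rfl
    omega

lemma exists_sink [Nonempty V] (o : V → V → ℕ) (ho : AcyclicMul o) :
    ∃ v : V, ∀ u, o v u = 0 := by
  set r : V → V → Prop := fun a b => Relation.TransGen (fun p q => 0 < o p q) b a with hr
  haveI : IsTrans V r := ⟨fun a b c hab hbc => Relation.TransGen.trans hbc hab⟩
  haveI : IsIrrefl V r := ⟨fun a h => ho a h⟩
  have wf := Finite.wellFounded_of_trans_of_irrefl r
  obtain ⟨v, -, hmin⟩ := wf.has_min Set.univ ⟨Classical.arbitrary V, trivial⟩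
  refine ⟨v, fun u => ?_⟩
  by_contra h
  exact hmin u trivial (Relation.TransGen.single (Nat.pos_of_ne_zero h))

section Backward
variable {m : V → V → ℕ}

/-- One step of the game from a `ρ + a` configuration. -/
lemma good_step [Nonempty V] (hsym : ∀ u v, m u v = m v u) (hloop : Loopless m)
    (o : V → V → ℕ) (hor : ∀ u v, o u v + o v u = m u v) (hacyc : AcyclicMul o)
    (a : V → ℤ) (ha : 0 ≤ a) :
    ∃ v, outdeg m v ≤ (∑ u, (o u v : ℤ)) + a v ∧
      ∃ o' : V → V → ℕ, (∀ u v, o' u v + o' v u = m u v) ∧ AcyclicMul o' ∧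
        fire m (fun u => (∑ p, (o p u : ℤ)) + a u) v
          = fun u => (∑ p, (o' p u : ℤ)) + a u := by
  obtain ⟨v, hv⟩ := exists_sink o hacyc
  have hov : ∀ u, o u v = m u v := fun u => by have := hor u v; rw [hv u] at this; omega
  have hρv : (∑ u, (o u v : ℤ)) = outdeg m v := by
    rw [Finset.sum_congr rfl (fun u _ => by rw [hov u])]
    unfold outdeg
    exact Finset.sum_congr rfl (fun u _ => by rw [hsym u v])
  refine ⟨v, ?_, ?_⟩
  · -- legality
    rw [hρv]
    have hav : (0:ℤ) ≤ a v := ha v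
    omega
  · -- new orientation
    set o' : V → V → ℕ := fun p q => if p = v then m v q else if q = v then 0 else o p q with ho'
    have ho'vq : ∀ q, o' v q = m v q := fun q => if_pos rfl
    have ho'pv : ∀ p, o' p v = 0 := fun p => by
      by_cases hp : p = v
      · subst hp; rw [ho'vq, hloop]
      · show (if p = v then m v v else if v = v then 0 else o p v) = 0
        rw [if_neg hp, if_pos rfl]
    have ho'pq : ∀ p q, p ≠ v → q ≠ v → o' p q = o p q := fun p q hp hq => by
      show (if p = v then m v q else if q = v then 0 else o p q) = o p q
      rw [if_neg hp, if_neg hq]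
    refine ⟨o', ?_, ?_, ?_⟩
    · intro p q
      by_cases hp : p = v <;> by_cases hq : q = v
      · rw [hp, hq, ho'pv, hloop]
      · rw [hp, ho'vq q, ho'pv q]; ring
      · rw [hq, ho'pv p, ho'vq p, hsym p v]; ring
      · rw [ho'pq p q hp hq, ho'pq q p hq hp]; exact hor p q
    · -- acyclicity of o'
      intro c hcyc
      have htarget : ∀ p q, 0 < o' p q → q ≠ v := by
        intro p q h hq
        subst hq
        rw [ho'pv] at h
        omega
      have hend : ∀ p q, Relation.TransGen (fun a b => 0 < o' a b) p q → q ≠ v := by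
        intro p q h
        induction h with
        | single h => exact htarget _ _ h
        | tail h₂ h₃ ih => exact htarget _ _ h₃
      have hcv : c ≠ v := hend _ _ hcyc
      have hedge' : ∀ p q, 0 < o' p q → p ≠ v → 0 < o p q := by
        intro p q h hp
        rwa [ho'pq p q hp (htarget p q h)] at h
      have htrans : ∀ p q, Relation.TransGen (fun a b => 0 < o' a b) p q →
          p ≠ v → Relation.TransGen (fun a b => 0 < o a b) p q := by
        intro p q h
        induction h using Relation.TransGen.head_induction_on with
        | single h => exact fun hp => Relation.TransGen.single (hedge' _ _ h hp)
        | head h₁ h₂ ih =>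
          intro hp
          exact Relation.TransGen.head (hedge' _ _ h₁ hp) (ih (htarget _ _ h₁))
      exact hacyc c (htrans c c hcyc hcv)
    · -- fire computes
      funext u
      by_cases hu : u = v
      · subst hu
        show ((∑ p, (o p u : ℤ)) + a u) + (m u u : ℤ) - (if u = u then outdeg m u else 0)
          = (∑ p, (o' p u : ℤ)) + a u
        rw [if_pos rfl, hρv]
        have h1 : (∑ p, (o' p u : ℤ)) = 0 :=
          Finset.sum_eq_zero (fun p _ => by rw [ho'pv p]; rfl)
        rw [h1, hloop]
        push_cast
        ring
      · show ((∑ p, (o p u : ℤ)) + a u) + (m v u : ℤ) - (if u = v then outdeg m v else 0)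
          = (∑ p, (o' p u : ℤ)) + a u
        rw [if_neg hu]
        have h1 : (∑ p, (o' p u : ℤ)) = (m v u : ℤ) + ∑ p ∈ Finset.univ.erase v, (o p u : ℤ) := by
          rw [← Finset.add_sum_erase _ _ (Finset.mem_univ v), ho'vq]
          congr 1
          exact Finset.sum_congr rfl
            (fun p hp => by rw [ho'pq p u (Finset.ne_of_mem_erase hp) hu])
        have h2 : (∑ p, (o p u : ℤ)) = (o v u : ℤ) + ∑ p ∈ Finset.univ.erase v, (o p u : ℤ) := by
          rw [← Finset.add_sum_erase _ _ (Finset.mem_univ v)]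
        rw [h1, h2, hv u]
        push_cast
        ring
end Backward

section Backward2
variable {m : V → V → ℕ}

lemma good_nonterm [Nonempty V] (hsym : ∀ u v, m u v = m v u) (hloop : Loopless m)
    (o : V → V → ℕ) (hor : ∀ u v, o u v + o v u = m u v) (hacyc : AcyclicMul o)
    (a : V → ℤ) (ha : 0 ≤ a) :
    ¬ Terminating m (fun u => (∑ p, (o p u : ℤ)) + a u) := by
  set Good : (V → ℤ) → Prop := fun w => ∃ o' : V → V → ℕ,
    (∀ u v, o' u v + o' v u = m u v) ∧ AcyclicMul o' ∧
      w = fun u => (∑ p, (o' p u : ℤ)) + a u with hGood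
  have hstep : ∀ w, Good w → ∃ v, outdeg m v ≤ w v ∧ Good (fire m w v) := by
    rintro w ⟨o', hor', hacyc', rfl⟩
    obtain ⟨v, hleg, o'', hor'', hacyc'', hfire⟩ := good_step hsym hloop o' hor' hacyc' a ha
    exact ⟨v, hleg, o'', hor'', hacyc'', hfire⟩
  rw [Terminating, not_not]
  set y : V → ℤ := fun u => (∑ p, (o p u : ℤ)) + a u with hy
  have hyGood : Good y := ⟨o, hor, hacyc, rfl⟩
  let next : {w // Good w} → V × {w // Good w} := fun p =>
    ⟨(hstep p.1 p.2).choose,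
     ⟨fire m p.1 (hstep p.1 p.2).choose, (hstep p.1 p.2).choose_spec.2⟩⟩
  let st : ℕ → {w // Good w} := fun n => Nat.rec ⟨y, hyGood⟩ (fun _ p => (next p).2) n
  refine ⟨fun n => (next (st n)).1, ?_⟩
  have hstate : ∀ n, gameState m y (fun n => (next (st n)).1) n = (st n).1 := by
    intro n
    induction n with
    | zero => rfl
    | succ n ih =>
      show fire m (gameState m y _ n) ((next (st n)).1) = (st (n+1)).1
      rw [ih]
  intro n
  rw [hstate n]
  exact (hstep (st n).1 (st n).2).choose_spec.1

lemma nonterm_fire (hsym : ∀ u v, m u v = m v u) (hconn : StronglyConnected m)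
    {y : V → ℤ} (v : V) (h : ¬ Terminating m y) : ¬ Terminating m (fire m y v) := by
  rw [Terminating, not_not] at h ⊢
  obtain ⟨s, hs⟩ := h
  have hio := fires_io hsym hconn hs
  have hex : ∃ n, s n = v := by obtain ⟨n, _, hn⟩ := hio v 0; exact ⟨n, hn⟩
  set k := Nat.find hex with hk
  have hsk : s k = v := Nat.find_spec hex
  have hlt : ∀ i, i < k → s i ≠ v := fun i hi => Nat.find_min hex hi
  set s' : ℕ → V := fun i => if i < k then s i else s (i+1) with hs'
  refine ⟨s', ?_⟩
  set x' : V → ℤ := fire m y v with hx'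
  have claim1 : ∀ n, n ≤ k → ∀ u, gameState m x' s' n u = gameState m y s n u + lap m (ind v) u := by
    intro n
    induction n with
    | zero => intro _ u; exact fire_eq m y v u
    | succ n ih =>
      intro hn u
      have hnk : n < k := by omega
      have hs'n : s' n = s n := by rw [hs']; simp only [if_pos hnk]
      have e1 : gameState m x' s' (n+1) u
          = gameState m x' s' n u + lap m (ind (s' n)) u := fire_eq m _ (s' n) u
      have e2 : gameState m y s (n+1) u
          = gameState m y s n u + lap m (ind (s n)) u := fire_eq m _ (s n) u
      rw [e1, e2, hs'n, ih (by omega) u]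
      ring
  have claim2 : ∀ n, k ≤ n → ∀ u, gameState m x' s' n u = gameState m y s (n+1) u := by
    intro n
    induction n with
    | zero =>
      intro hn u
      have hk0 : k = 0 := by omega
      have e2 : gameState m y s 1 u = gameState m y s 0 u + lap m (ind (s 0)) u := fire_eq m _ _ u
      rw [e2]
      have : s 0 = v := by rw [← hk0] at *; exact hsk
      rw [this]
      exact claim1 0 (by omega) u
    | succ n ih =>
      intro hn u
      rcases Nat.lt_or_ge n k with h | h
      · -- n + 1 = k
        have hnk : n + 1 = k := by omega
        have e1 : gameState m x' s' (n+1) u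
            = gameState m x' s' n u + lap m (ind (s' n)) u := fire_eq m _ _ u
        have e2 : gameState m y s (n+2) u
            = gameState m y s (n+1) u + lap m (ind (s (n+1))) u := fire_eq m _ _ u
        have hs'n : s' n = s n := by rw [hs']; simp only [if_pos h]
        have e3 : gameState m y s (n+1) u
            = gameState m y s n u + lap m (ind (s n)) u := fire_eq m _ _ u
        have hsv : s (n+1) = v := by rw [hnk]; exact hsk
        rw [e1, e2, e3, hs'n, hsv, claim1 n (by omega) u]
        ring
      · have e1 : gameState m x' s' (n+1) u
            = gameState m x' s' n u + lap m (ind (s' n)) u := fire_eq m _ _ u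
        have e2 : gameState m y s (n+2) u
            = gameState m y s (n+1) u + lap m (ind (s (n+1))) u := fire_eq m _ _ u
        have hs'n : s' n = s (n+1) := by rw [hs']; simp only [if_neg (by omega : ¬ n < k)]
        rw [e1, e2, hs'n, ih h u]
  intro n
  rcases Nat.lt_or_ge n k with h | h
  · have hs'n : s' n = s n := by rw [hs']; simp only [if_pos h]
    rw [hs'n, claim1 n (by omega) (s n)]
    have hne : s n ≠ v := hlt n h
    have hlap : lap m (ind v) (s n) = (m v (s n) : ℤ) := by
      rw [lap_ind, if_neg hne]; ring
    rw [hlap]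
    have : (0:ℤ) ≤ (m v (s n) : ℤ) := Int.natCast_nonneg _
    have := hs n
    omega
  · have hs'n : s' n = s (n+1) := by rw [hs']; simp only [if_neg (by omega : ¬ n < k)]
    rw [hs'n, claim2 n h (s (n+1))]
    exact hs (n+1)

end Backward2

section Transfer
variable {m : V → V → ℕ}

lemma nonterm_lap_nat (hsym : ∀ u v, m u v = m v u) (hconn : StronglyConnected m) :
    ∀ (n : ℕ) (z : V → ℕ) (y : V → ℤ), (∑ v, z v) = n → ¬ Terminating m y →
      ¬ Terminating m (fun u => y u + lap m (fun v => (z v : ℤ)) u) := by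
  intro n
  induction n using Nat.strong_induction_on with
  | _ n ih =>
    intro z y hsum hy
    by_cases h0 : n = 0
    · have hz : ∀ v, z v = 0 := by
        subst h0
        intro v
        exact Finset.sum_eq_zero_iff.mp hsum v (Finset.mem_univ v)
      have heq : (fun u => y u + lap m (fun v => (z v : ℤ)) u) = y := by
        funext u
        have hfun : (fun v => ((z v : ℕ) : ℤ)) = (0 : V → ℤ) :=
          funext (fun v => by rw [hz v]; rfl)
        rw [hfun, lap_zero]; ring
      rwa [heq]
    · have hex : ∃ v, 0 < z v := by
        by_contra hc
        push_neg at hc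
        have : ∑ v, z v = 0 := Finset.sum_eq_zero (fun v _ => by have := hc v; omega)
        omega
      obtain ⟨v, hv⟩ := hex
      set z' : V → ℕ := fun u => z u - (if u = v then 1 else 0) with hz'
      have hcast : ∀ u, ((z u : ℤ)) = (z' u : ℤ) + ind v u := by
        intro u
        by_cases h : u = v
        · simp only [hz', ind, if_pos h]
          rw [h]
          omega
        · simp only [hz', ind, if_neg h]
          omega
      have hsum' : ∑ u, z' u = n - 1 := by
        have h1 : ∑ u, z' u = z' v + ∑ u ∈ Finset.univ.erase v, z' u :=
          (Finset.add_sum_erase _ _ (Finset.mem_univ v)).symm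
        have h2 : ∑ u, z u = z v + ∑ u ∈ Finset.univ.erase v, z u :=
          (Finset.add_sum_erase _ _ (Finset.mem_univ v)).symm
        have h3 : ∑ u ∈ Finset.univ.erase v, z' u = ∑ u ∈ Finset.univ.erase v, z u :=
          Finset.sum_congr rfl (fun u hu => by
            simp only [hz', if_neg (Finset.ne_of_mem_erase hu)]; omega)
        have h4 : z' v = z v - 1 := by simp [hz']
        omega
      have hstep : (fun u => y u + lap m (fun w => (z w : ℤ)) u)
          = fire m (fun u => y u + lap m (fun w => (z' w : ℤ)) u) v := by
        funext u
        rw [fire_eq]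
        have hfun : (fun w => (z w : ℤ)) = (fun w => (z' w : ℤ) + ind v w) := funext hcast
        have hadd := lap_add' m (fun w => (z' w : ℤ)) (ind v) u
        rw [hfun, hadd]
        ring
      rw [hstep]
      exact nonterm_fire hsym hconn v (ih (n-1) (by omega) z' y hsum' hy)

lemma nonterm_equiv [Nonempty V] (hsym : ∀ u v, m u v = m v u) (hconn : StronglyConnected m)
    {x y : V → ℤ} (h : LinEquiv m x y) (hy : ¬ Terminating m y) : ¬ Terminating m x := by
  obtain ⟨z, hx⟩ := h
  have hne : (Finset.univ : Finset V).Nonempty := Finset.univ_nonempty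
  set b := Finset.univ.inf' hne z with hb
  set zn : V → ℕ := fun v => (z v - b).toNat with hzn
  have hznv : ∀ v, (zn v : ℤ) = z v - b := fun v => by
    rw [hzn]
    exact Int.toNat_of_nonneg (by
      have := Finset.inf'_le z (Finset.mem_univ v)
      omega)
  have hxy : x = fun u => y u + lap m (fun v => (zn v : ℤ)) u := by
    funext u
    rw [hx]
    simp only [Pi.add_apply]
    have hfun : z = (fun v => (zn v : ℤ) + (fun _ => b) v) :=
      funext (fun v => by rw [hznv v]; ring)
    have hadd := lap_add' m (fun v => (zn v : ℤ)) (fun _ => b) u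
    rw [hfun, hadd, lap_const m hsym b u]
    ring
  rw [hxy]
  exact nonterm_lap_nat hsym hconn (∑ v, zn v) zn y rfl hy

end Transfer

/-- On an undirected graph (bidirected digraph), a chip-distribution `x` is
non-terminating iff `x ∼ ρ + a` for the indegree vector `ρ` of some acyclic orientation
and some `a ≥ 0`. -/
theorem nonterminating_iff_acyclic_orientation
    {V : Type} [Fintype V] [DecidableEq V] [Nonempty V]
    (m : V → V → ℕ) (hsym : ∀ u v, m u v = m v u)
    (hloop : Loopless m) (hconn : StronglyConnected m)
    (x : V → ℤ) :
    ¬ Terminating m x ↔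
      ∃ o : V → V → ℕ, (∀ u v, o u v + o v u = m u v) ∧ AcyclicMul o ∧
        ∃ a : V → ℤ, 0 ≤ a ∧ LinEquiv m x (fun v => (∑ u, (o u v : ℤ)) + a v) := by
  constructor
  · exact forward_dir hsym hloop hconn
  · rintro ⟨o, hor, hacyc, a, ha, hequiv⟩
    exact nonterm_equiv hsym hconn hequiv (good_nonterm hsym hloop o hor hacyc a ha)
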